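/- Let A, C_1, …, C_r ∈ ℝ^{n×n}, B, D_1, …, D_r ∈ ℝ^{n×m}, E_0, …, E_r ∈ ℝ^{q×n}, R a real symmetric positive definite m×m matrix, and T ∈ ℝ^{m×n}. For 0 ≤ l ≤ r define Ê_l ∈ ℝ^{((q+m)(r+1))×n} as the stacked block matrix whose first r+1 blocks are q×n, all zero except the (l+1)-st block which equals E_l, and whose last r+1 blocks are m×n, all zero except the (l+1)-st block which equals √((1/(r+1))·R)·T, where √ denotes the unique symmetric positive definite square root. If the system [E_0, …, E_r; A, C_1, …, C_r] is stochastically detectable, then the system [Ê_0, …, Ê_r; A + B T, C_1 + D_1 T, …, C_r + D_r T] is stochastically detectable. -/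

import Mathlib

open Matrix

noncomputable section

/-- Mean-square stability of the tuple `(F, G_1, …, G_r)` via the Lyapunov characterization. -/
def MSStable {n r : ℕ} (F : Matrix (Fin n) (Fin n) ℝ)
    (G : Fin r → Matrix (Fin n) (Fin n) ℝ) : Prop :=
  ∃ X : Matrix (Fin n) (Fin n) ℝ, X.PosDef ∧
    (-(X * F + Fᵀ * X + ∑ l, (G l)ᵀ * X * G l)).PosDef

/-- Stochastic detectability of the system `[E_0, …, E_r; F, G_1, …, G_r]`,
with observation matrices of row index type `p`. -/
def StochDetectable {n r : ℕ} {p : Type*} [Fintype p]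
    (E0 : Matrix p (Fin n) ℝ) (E : Fin r → Matrix p (Fin n) ℝ)
    (F : Matrix (Fin n) (Fin n) ℝ) (G : Fin r → Matrix (Fin n) (Fin n) ℝ) : Prop :=
  ∃ Θ : Matrix (Fin n) p ℝ, MSStable (F + Θ * E0) (fun l => G l + Θ * E l)

/-- The stacked observation matrix `Ê_l`: the first `r+1` blocks are `q × n`, all zero
except the `(l+1)`-st which equals `E_l` (here `Efull l`), and the last `r+1` blocks are
`m × n`, all zero except the `(l+1)`-st which equals `M` (to be taken as `√((1/(r+1))·R)·T`). -/
def Ehat {n m q r : ℕ} (Efull : Fin (r + 1) → Matrix (Fin q) (Fin n) ℝ)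
    (M : Matrix (Fin m) (Fin n) ℝ) (l : Fin (r + 1)) :
    Matrix ((Fin (r + 1) × Fin q) ⊕ (Fin (r + 1) × Fin m)) (Fin n) ℝ :=
  fun i j =>
    match i with
    | Sum.inl (k, a) => if k = l then Efull l a j else 0
    | Sum.inr (k, a) => if k = l then M a j else 0

lemma hat_mul {n m q r : ℕ} (Efull : Fin (r + 1) → Matrix (Fin q) (Fin n) ℝ)
    (M : Matrix (Fin m) (Fin n) ℝ) (Θ : Matrix (Fin n) (Fin q) ℝ)
    (Ψ : Fin (r + 1) → Matrix (Fin n) (Fin m) ℝ) (l : Fin (r + 1)) :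
    (Matrix.of fun i j => match j with
      | Sum.inl (k, a) => Θ i a
      | Sum.inr (k, a) => Ψ k i a :
        Matrix (Fin n) ((Fin (r + 1) × Fin q) ⊕ (Fin (r + 1) × Fin m)) ℝ) * Ehat Efull M l
      = Θ * Efull l + Ψ l * M := by
  ext i j
  simp only [Matrix.mul_apply, Matrix.add_apply, Fintype.sum_sum_type,
    Fintype.sum_prod_type, Ehat, Matrix.of_apply, mul_ite, mul_zero]
  rw [Finset.sum_comm, Finset.sum_comm (γ := Fin (r + 1))]
  simp [Finset.sum_ite_eq]

def BDmat {n m r : ℕ} (B : Matrix (Fin n) (Fin m) ℝ)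
    (D : Fin r → Matrix (Fin n) (Fin m) ℝ) : Fin (r + 1) → Matrix (Fin n) (Fin m) ℝ :=
  Fin.cases B D

/-- stochastic detectability is preserved under state feedback `T`, after
augmenting the observation matrices by the weighted feedback `√((1/(r+1))·R)·T`.
Here `Sq` is the unique symmetric positive definite square root of `(1/(r+1))·R`. -/
theorem statement8 {n m q r : ℕ}
    (A : Matrix (Fin n) (Fin n) ℝ) (C : Fin r → Matrix (Fin n) (Fin n) ℝ)
    (B : Matrix (Fin n) (Fin m) ℝ) (D : Fin r → Matrix (Fin n) (Fin m) ℝ)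
    (E0 : Matrix (Fin q) (Fin n) ℝ) (E : Fin r → Matrix (Fin q) (Fin n) ℝ)
    (R : Matrix (Fin m) (Fin m) ℝ) (hR : R.PosDef)
    (T : Matrix (Fin m) (Fin n) ℝ)
    (Sq : Matrix (Fin m) (Fin m) ℝ) (hSq : Sq.PosDef)
    (hSqsq : Sq * Sq = ((r : ℝ) + 1)⁻¹ • R)
    (hdet : StochDetectable E0 E A C) :
    StochDetectable
      (Ehat (Fin.cases E0 E) (Sq * T) 0)
      (fun l : Fin r => Ehat (Fin.cases E0 E) (Sq * T) l.succ)
      (A + B * T) (fun l => C l + D l * T) := by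
  obtain ⟨Θ, hΘ⟩ := hdet
  have hBD0 : BDmat B D 0 = B := rfl
  have hBDs : ∀ l : Fin r, BDmat B D l.succ = D l := fun l => rfl
  have hSqinv : Sq⁻¹ * Sq = 1 := Matrix.nonsing_inv_mul Sq (isUnit_iff_ne_zero.2 hSq.det_pos.ne')
  refine ⟨Matrix.of fun i j => match j with
      | Sum.inl (k, a) => Θ i a
      | Sum.inr (k, a) => (-(BDmat B D k) * Sq⁻¹) i a, ?_⟩
  have key : ∀ l : Fin (r + 1),
      (Matrix.of fun i j => match j with
        | Sum.inl (k, a) => Θ i a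
        | Sum.inr (k, a) => (-(BDmat B D k) * Sq⁻¹) i a :
          Matrix (Fin n) ((Fin (r + 1) × Fin q) ⊕ (Fin (r + 1) × Fin m)) ℝ)
        * Ehat (Fin.cases E0 E) (Sq * T) l
      = Θ * (Fin.cases E0 E l) - (BDmat B D l) * T := by
    intro l
    rw [hat_mul (Ψ := fun k => -(BDmat B D k) * Sq⁻¹)]
    rw [Matrix.mul_assoc, ← Matrix.mul_assoc Sq⁻¹, hSqinv, Matrix.one_mul]
    simp [sub_eq_add_neg]
    rfl
  have harr : ∀ P Q S : Matrix (Fin n) (Fin n) ℝ, P + Q + (S - Q) = P + S := by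
    intro P Q S; abel
  simp only [key, Fin.cases_zero, Fin.cases_succ, hBD0, hBDs, harr]
  exact hΘ
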